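/- Let v₁, …, v_r be orthonormal vectors in ℝⁿ with Lᵀ H L vᵢ = λᵢ vᵢ, set uᵢ = L vᵢ, wᵢ = L⁻ᵀ vᵢ, Uᵣ = [u₁ … u_r], Wᵣ = [w₁ … w_r], and Pᵣ = Uᵣ Wᵣᵀ. Then Pᵣᵀ H Pᵣ + Γ_pr⁻¹ is positive definite and (Pᵣᵀ H Pᵣ + Γ_pr⁻¹)⁻¹ = Γ_pr − Σ_{i=1}^r (λᵢ/(1+λᵢ)) uᵢ uᵢᵀ; i.e. the covariance of the approximate posterior obtained by projecting the argument of the likelihood onto the likelihood-informed subspace is a rank-r negative semidefinite update of the prior covariance. -/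

import Mathlib

open Matrix

private lemma mulVec_dot {n : ℕ} (A : Matrix (Fin n) (Fin n) ℝ) (x y : Fin n → ℝ) :
    (A *ᵥ x) ⬝ᵥ y = x ⬝ᵥ (Aᵀ *ᵥ y) := by
  rw [dotProduct_comm, dotProduct_mulVec, dotProduct_comm, mulVec_transpose]

private lemma vmv_mul_vmv {n : ℕ} (a b c d : Fin n → ℝ) :
    vecMulVec a b * vecMulVec c d = (b ⬝ᵥ c) • vecMulVec a d := by
  ext i j
  simp only [mul_apply, vecMulVec_apply, Matrix.smul_apply, dotProduct, smul_eq_mul,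
    Finset.sum_mul, Finset.mul_sum]
  exact Finset.sum_congr rfl fun k _ => by ring

private lemma vmv_mul {n : ℕ} (a b : Fin n → ℝ) (M : Matrix (Fin n) (Fin n) ℝ) :
    vecMulVec a b * M = vecMulVec a (Mᵀ *ᵥ b) := by
  ext i j
  simp only [mul_apply, vecMulVec_apply, mulVec, dotProduct, transpose_apply, Finset.mul_sum]
  exact Finset.sum_congr rfl fun k _ => by ring

private lemma mul_vmv {n : ℕ} (M : Matrix (Fin n) (Fin n) ℝ) (a b : Fin n → ℝ) :
    M * vecMulVec a b = vecMulVec (M *ᵥ a) b := by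
  ext i j
  simp only [mul_apply, vecMulVec_apply, mulVec, dotProduct, Finset.sum_mul]
  exact Finset.sum_congr rfl fun k _ => by ring

/-- with `v₁,…,v_r` orthonormal eigenvectors of `LᵀHL`,
`uᵢ = L vᵢ`, `wᵢ = L⁻ᵀ vᵢ`, `Uᵣ = [u₁ … u_r]`, `Wᵣ = [w₁ … w_r]`, `Pᵣ = Uᵣ Wᵣᵀ`,
the matrix `Pᵣᵀ H Pᵣ + Γ_pr⁻¹` is positive definite and its inverse equals
`Γ_pr − Σᵢ (λᵢ/(1+λᵢ)) uᵢ uᵢᵀ`. -/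
theorem stmt_7 {n r : ℕ} (hn : 1 ≤ n) (hr1 : 1 ≤ r) (hrn : r ≤ n)
    (Γpr L H : Matrix (Fin n) (Fin n) ℝ)
    (hΓpr : Γpr.PosDef) (hL : IsUnit L.det) (hLL : Γpr = L * Lᵀ)
    (hH : H.PosSemidef)
    (v : Fin r → Fin n → ℝ) (lam : Fin r → ℝ)
    (hON : ∀ i j, v i ⬝ᵥ v j = if i = j then (1 : ℝ) else 0)
    (heig : ∀ i, (Lᵀ * H * L) *ᵥ v i = lam i • v i)
    (u w : Fin r → Fin n → ℝ)
    (hu : ∀ i, u i = L *ᵥ v i) (hw : ∀ i, w i = (Lᵀ)⁻¹ *ᵥ v i)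
    (U W : Matrix (Fin n) (Fin r) ℝ)
    (hU : ∀ i j, U i j = u j i) (hW : ∀ i j, W i j = w j i)
    (P : Matrix (Fin n) (Fin n) ℝ) (hP : P = U * Wᵀ) :
    (Pᵀ * H * P + Γpr⁻¹).PosDef ∧
      (Pᵀ * H * P + Γpr⁻¹)⁻¹ =
        Γpr - ∑ i : Fin r, (lam i / (1 + lam i)) • vecMulVec (u i) (u i) := by
  have hLT : IsUnit Lᵀ.det := isUnit_det_transpose L hL
  have hHs : Hᵀ = H := by
    ext i j
    conv_rhs => rw [← hH.1]
    simp [conjTranspose_apply]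
  have hΓs : Γprᵀ = Γpr := by
    ext i j
    conv_rhs => rw [← hΓpr.1]
    simp [conjTranspose_apply]
  -- basic vector identities
  have hΓw : ∀ i, Γpr *ᵥ w i = u i := by
    intro i
    rw [hLL, hw, hu, mulVec_mulVec, mul_assoc, mul_nonsing_inv _ hLT, mul_one]
  have hΓiu : ∀ i, Γpr⁻¹ *ᵥ u i = w i := by
    intro i
    rw [hLL, hu, hw, Matrix.mul_inv_rev, mulVec_mulVec, mul_assoc,
      nonsing_inv_mul _ hL, mul_one]
  have hwu : ∀ i j, w i ⬝ᵥ u j = if i = j then (1 : ℝ) else 0 := by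
    intro i j
    rw [hw, hu, dotProduct_mulVec]
    have : ((Lᵀ)⁻¹ *ᵥ v i) ᵥ* L = v i := by
      rw [← mulVec_transpose, mulVec_mulVec, mul_nonsing_inv _ hLT, one_mulVec]
    rw [this, hON]
  have hHuu : ∀ i j, (H *ᵥ u i) ⬝ᵥ u j = if i = j then lam i else 0 := by
    intro i j
    rw [dotProduct_comm, hu, hu, mulVec_mulVec, mulVec_dot, mulVec_mulVec,
      ← mul_assoc, heig i, dotProduct_smul, smul_eq_mul, hON]
    by_cases h : i = j
    · subst h; simp
    · rw [if_neg (fun hh => h hh.symm), if_neg h, mul_zero]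
  have hlam : ∀ i, 0 ≤ lam i := by
    intro i
    have h1 := hH.dotProduct_mulVec_nonneg (u i)
    have h2 := hHuu i i
    rw [if_pos rfl] at h2
    rw [← h2, dotProduct_comm]
    simpa using h1
  have h1lam : ∀ i, (1 : ℝ) + lam i ≠ 0 := fun i => by have := hlam i; intro hh; linarith
  -- P as a sum of rank-one matrices
  have hP' : P = ∑ i : Fin r, vecMulVec (u i) (w i) := by
    ext i j
    rw [hP]
    simp [mul_apply, hU, hW, vecMulVec_apply, Matrix.sum_apply]
  have hPT : Pᵀ = ∑ i : Fin r, vecMulVec (w i) (u i) := by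
    rw [hP']
    ext i j
    simp only [vecMulVec_apply, transpose_apply, Matrix.sum_apply]
    exact Finset.sum_congr rfl fun k _ => mul_comm _ _
  -- the projected Hessian
  have hPHP : Pᵀ * H * P = ∑ i : Fin r, lam i • vecMulVec (w i) (w i) := by
    rw [hPT, hP', Finset.sum_mul, Finset.sum_mul]
    have step1 : ∀ i : Fin r, vecMulVec (w i) (u i) * H = vecMulVec (w i) (H *ᵥ u i) := by
      intro i; rw [vmv_mul, hHs]
    refine Finset.sum_congr rfl fun i _ => ?_
    rw [step1, Finset.mul_sum]
    have step2 : ∀ j : Fin r, vecMulVec (w i) (H *ᵥ u i) * vecMulVec (u j) (w j)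
        = (if i = j then lam i else 0) • vecMulVec (w i) (w j) := by
      intro j; rw [vmv_mul_vmv, hHuu]
    simp only [step2, ite_smul, zero_smul]
    simp
  -- key product identity
  set c : Fin r → ℝ := fun i => lam i / (1 + lam i) with hc
  set X : Fin r → Matrix (Fin n) (Fin n) ℝ := fun i => vecMulVec (w i) (u i) with hX
  have key : (Pᵀ * H * P + Γpr⁻¹) *
      (Γpr - ∑ i : Fin r, c i • vecMulVec (u i) (u i)) = 1 := by
    rw [hPHP, add_mul, mul_sub, mul_sub]
    have p1 : (∑ i : Fin r, lam i • vecMulVec (w i) (w i)) * Γpr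
        = ∑ i : Fin r, lam i • X i := by
      rw [Finset.sum_mul]
      refine Finset.sum_congr rfl fun i _ => ?_
      rw [smul_mul_assoc, vmv_mul, hΓs, hΓw]
    have p2 : (∑ i : Fin r, lam i • vecMulVec (w i) (w i)) *
        (∑ j : Fin r, c j • vecMulVec (u j) (u j)) = ∑ i : Fin r, (lam i * c i) • X i := by
      rw [Finset.sum_mul]
      refine Finset.sum_congr rfl fun i _ => ?_
      rw [Finset.mul_sum]
      have : ∀ j : Fin r, (lam i • vecMulVec (w i) (w i)) * (c j • vecMulVec (u j) (u j))
          = ((if i = j then (1:ℝ) else 0) * (lam i * c j)) • vecMulVec (w i) (u j) := by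
        intro j
        rw [smul_mul_assoc, mul_smul_comm, vmv_mul_vmv, hwu, smul_smul, smul_smul]
        ring_nf
      simp only [this, ite_mul, one_mul, zero_mul, ite_smul, zero_smul]
      simp [hX]
    have p3 : Γpr⁻¹ * Γpr = 1 :=
      nonsing_inv_mul _ (isUnit_iff_ne_zero.mpr hΓpr.det_pos.ne')
    have p4 : Γpr⁻¹ * (∑ j : Fin r, c j • vecMulVec (u j) (u j))
        = ∑ j : Fin r, c j • X j := by
      rw [Finset.mul_sum]
      refine Finset.sum_congr rfl fun j _ => ?_
      rw [mul_smul_comm, mul_vmv, hΓiu]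
    rw [p1, p2, p3, p4]
    have hz : (∑ i : Fin r, lam i • X i) - (∑ i : Fin r, (lam i * c i) • X i)
        - (∑ i : Fin r, c i • X i) = 0 := by
      rw [← Finset.sum_sub_distrib, ← Finset.sum_sub_distrib]
      refine Finset.sum_eq_zero fun i _ => ?_
      rw [← sub_smul, ← sub_smul]
      have : lam i - lam i * c i - c i = 0 := by
        have hne := h1lam i
        rw [hc]
        field_simp
        ring
      rw [this, zero_smul]
    have := sub_eq_zero.mp hz
    rw [sub_eq_iff_eq_add] at this
    rw [this]
    abel
  constructor
  · have hPH : Pᴴ = Pᵀ := by ext i j; simp [conjTranspose_apply]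
    have hpsd : (Pᵀ * H * P).PosSemidef := by
      have := hH.conjTranspose_mul_mul_same P
      rwa [hPH] at this
    exact Matrix.PosDef.posSemidef_add hpsd hΓpr.inv
  · exact inv_eq_right_inv key
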